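/- Let f : ℝ² → ℝ be L-Lipschitz, Q = [0,1]², and let ℓ₁, ℓ₂, ℓ₃ be three lines bounding a triangle △ with 5cQ ⊂ △ ⊂ Q (for a small constant c > 0), such that for each j there is an affine map A_j : ℝ² → ℝ with sup_{x ∈ ℓ_j ∩ Q} |f(x) − A_j(x)| ≤ β. Let A be the unique affine map agreeing with f at the three corners p₁, p₂, p₃ of △. Then sup_{x ∈ ℓ_j ∩ Q} |A(x) − A_j(x)| ≤ C(c) · β for each j. -/

import Mathlib

open scoped RealInnerProductSpace NNReal

/-- The unit square `[0,1]²` in the plane. -/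
def unitSq : Set (EuclideanSpace ℝ (Fin 2)) := {x | ∀ i, x i ∈ Set.Icc (0 : ℝ) 1}

/-- The concentric cube `5cQ` for `Q = [0,1]²`. -/
def fiveCQ (c : ℝ) : Set (EuclideanSpace ℝ (Fin 2)) := {x | ∀ i, |x i - 1 / 2| ≤ 5 * c / 2}

lemma stmt12.inner2 (x y : EuclideanSpace ℝ (Fin 2)) : ⟪x,y⟫ = x 0 * y 0 + x 1 * y 1 := by
  simp [PiLp.inner_apply, Fin.sum_univ_two, RCLike.inner_apply, mul_comm]

open stmt12 in
/-- Two vectors orthogonal to a unit vector in the plane are collinear. -/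
lemma stmt12.collin (e u v : EuclideanSpace ℝ (Fin 2)) (he : ‖e‖ = 1)
    (hu : ⟪e,u⟫ = 0) (hv : ⟪e,v⟫ = 0) (hvne : v ≠ 0) : ∃ t : ℝ, u = t • v := by
  have hee : e 0 * e 0 + e 1 * e 1 = 1 := by
    have := real_inner_self_eq_norm_mul_norm e
    rw [inner2, he] at this; linarith
  rw [inner2] at hu hv
  have key : ∀ w : EuclideanSpace ℝ (Fin 2), e 0 * w 0 + e 1 * w 1 = 0 →
      w 0 = -(e 0 * w 1 - e 1 * w 0) * e 1 ∧ w 1 = (e 0 * w 1 - e 1 * w 0) * e 0 := by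
    intro w hw
    constructor
    · linear_combination e 0 * hw - w 0 * hee
    · linear_combination e 1 * hw - w 1 * hee
  obtain ⟨hu0, hu1⟩ := key u hu
  obtain ⟨hv0, hv1⟩ := key v hv
  have hsv : e 0 * v 1 - e 1 * v 0 ≠ 0 := by
    intro h
    apply hvne
    ext i
    fin_cases i
    · show v 0 = 0; rw [hv0, h]; ring
    · show v 1 = 0; rw [hv1, h]; ring
  refine ⟨(e 0 * u 1 - e 1 * u 0) / (e 0 * v 1 - e 1 * v 0), ?_⟩
  ext i
  fin_cases i
  · show u 0 = _ * v 0
    field_simp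
    linear_combination (e 0 * v 1 - e 1 * v 0) * hu0 - (e 0 * u 1 - e 1 * u 0) * hv0
  · show u 1 = _ * v 1
    field_simp
    linear_combination (e 0 * v 1 - e 1 * v 0) * hu1 - (e 0 * u 1 - e 1 * u 0) * hv1

open stmt12 in
lemma stmt12.coord_le (x : EuclideanSpace ℝ (Fin 2)) (i : Fin 2) : |x i| ≤ ‖x‖ := by
  have h := real_inner_self_eq_norm_mul_norm x
  rw [inner2] at h
  have h0 : (0:ℝ) ≤ ‖x‖ := norm_nonneg x
  obtain rfl | rfl : i = 0 ∨ i = 1 := by omega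
  all_goals rw [abs_le]; constructor <;> nlinarith [sq_nonneg (x 0), sq_nonneg (x 1)]

open stmt12 in
lemma stmt12.hull_bound (e : EuclideanSpace ℝ (Fin 2)) (r b : ℝ)
    (p : Fin 3 → EuclideanSpace ℝ (Fin 2)) (hp : ∀ m, |⟪e, p m⟫ - r| ≤ b) :
    ∀ x ∈ convexHull ℝ (Set.range p), |⟪e, x⟫ - r| ≤ b := by
  intro x hx
  have hconv : Convex ℝ {x : EuclideanSpace ℝ (Fin 2) | |⟪e, x⟫ - r| ≤ b} := by
    have hs : {x : EuclideanSpace ℝ (Fin 2) | |⟪e, x⟫ - r| ≤ b}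
        = (innerₛₗ ℝ e) ⁻¹' Set.Icc (r - b) (r + b) := by
      ext y
      rw [Set.mem_setOf_eq, Set.mem_preimage, Set.mem_Icc, abs_le]
      have : (innerₛₗ ℝ e) y = ⟪e, y⟫ := rfl
      rw [this]
      constructor <;> rintro ⟨h1, h2⟩ <;> exact ⟨by linarith, by linarith⟩
    rw [hs]
    exact (convex_Icc _ _).linear_preimage (innerₛₗ ℝ e)
  exact convexHull_min (fun y hy => by obtain ⟨m, rfl⟩ := hy; exact hp m) hconv hx

open stmt12 in
/-- Diameter bound for the unit square. -/
lemma stmt12.diam_bound (x y : EuclideanSpace ℝ (Fin 2)) (hx : x ∈ unitSq) (hy : y ∈ unitSq) :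
    ‖x - y‖ ≤ 2 := by
  have h := real_inner_self_eq_norm_mul_norm (x - y)
  rw [inner2] at h
  have e0 : (x - y) 0 = x 0 - y 0 := rfl
  have e1 : (x - y) 1 = x 1 - y 1 := rfl
  rw [e0, e1] at h
  have hx0 := hx 0; have hx1 := hx 1; have hy0 := hy 0; have hy1 := hy 1
  simp only [Set.mem_Icc] at hx0 hx1 hy0 hy1
  nlinarith [norm_nonneg (x - y), hx0.1, hx0.2, hx1.1, hx1.2, hy0.1, hy0.2, hy1.1, hy1.2]

open stmt12 in
/-- Planar triangle comparison lemma: if the affine maps `A_j` approximate `f` up to `β`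
on the lines `ℓ_j ∩ Q` bounding a triangle `△` with `5cQ ⊆ △ ⊆ Q`, and `A` is the affine
map agreeing with `f` at the corners of `△`, then `|A − A_j| ≤ C(c)·β` on `ℓ_j ∩ Q`. -/
theorem stmt12 (c : ℝ) (hc : 0 < c) :
    ∃ C : ℝ, 0 < C ∧
      ∀ (L : ℝ≥0) (f : EuclideanSpace ℝ (Fin 2) → ℝ), LipschitzWith L f →
      ∀ (e : Fin 3 → EuclideanSpace ℝ (Fin 2)) (r : Fin 3 → ℝ), (∀ j, ‖e j‖ = 1) →
      ∀ p : Fin 3 → EuclideanSpace ℝ (Fin 2),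
        (∀ j i, i ≠ j → ⟪e j, p i⟫ = r j) →
        fiveCQ c ⊆ convexHull ℝ (Set.range p) →
        convexHull ℝ (Set.range p) ⊆ unitSq →
      ∀ (Aj : Fin 3 → (EuclideanSpace ℝ (Fin 2) →ᵃ[ℝ] ℝ)) (β : ℝ),
        (∀ j, ∀ x ∈ {x : EuclideanSpace ℝ (Fin 2) | ⟪e j, x⟫ = r j} ∩ unitSq,
          |f x - Aj j x| ≤ β) →
      ∀ A : EuclideanSpace ℝ (Fin 2) →ᵃ[ℝ] ℝ,
        (∀ i, A (p i) = f (p i)) →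
        ∀ j, ∀ x ∈ {x : EuclideanSpace ℝ (Fin 2) | ⟪e j, x⟫ = r j} ∩ unitSq,
          |A x - Aj j x| ≤ C * β := by
  refine ⟨1 + 8 / (5 * c), by positivity, ?_⟩
  intro L f hf e r he p hper hlow hhigh Aj β hβ A hA j x hx
  obtain ⟨hxl, hxQ⟩ := hx
  rw [Set.mem_setOf_eq] at hxl
  set ρ : ℝ := 5 * c / 2 with hρdef
  have hρpos : 0 < ρ := by positivity
  -- Step 1: corners are pairwise separated: ρ ≤ ‖p i - p k‖ for i ≠ k.
  have hsep : ∀ i k : Fin 3, i ≠ k → ρ ≤ ‖p i - p k‖ := by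
    intro i k hik
    set s : ℝ := ⟪e i, p i⟫ - r i with hsdef
    have hb : ∀ m, |⟪e i, p m⟫ - r i| ≤ |s| := by
      intro m
      by_cases hm : m = i
      · subst hm; exact le_refl _
      · rw [hper i m hm, sub_self, abs_zero]; exact abs_nonneg _
    have hbound := hull_bound (e i) (r i) (|s|) p hb
    -- the two probe points q ± ρ • e i
    set q : EuclideanSpace ℝ (Fin 2) := (WithLp.toLp 2 (fun _ => (1/2 : ℝ)) : EuclideanSpace ℝ (Fin 2)) with hq
    have hmem : ∀ σ : ℝ, |σ| = ρ → (q + σ • e i) ∈ fiveCQ c := by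
      intro σ hσ i'
      have : (q + σ • e i) i' - 1/2 = σ * (e i) i' := by
        show (q i' + (σ • e i) i') - 1/2 = _
        have : q i' = 1/2 := rfl
        rw [this, PiLp.smul_apply, smul_eq_mul]; ring
      rw [this, abs_mul, hσ]
      calc ρ * |(e i) i'| ≤ ρ * ‖e i‖ := by
            exact mul_le_mul_of_nonneg_left (coord_le _ _) (le_of_lt hρpos)
        _ = 5 * c / 2 := by rw [he i, mul_one]
    have hin : ∀ σ : ℝ, |σ| = ρ → |⟪e i, q⟫ + σ - r i| ≤ |s| := by
      intro σ hσ
      have h1 := hbound _ (hlow (hmem σ hσ))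
      have h2 : ⟪e i, q + σ • e i⟫ = ⟪e i, q⟫ + σ := by
        rw [inner_add_right, real_inner_smul_right, real_inner_self_eq_norm_mul_norm, he i]
        ring
      rwa [h2] at h1
    have hplus := hin ρ (abs_of_pos hρpos)
    have hminus := hin (-ρ) (by rw [abs_neg, abs_of_pos hρpos])
    have hsρ : ρ ≤ |s| := by
      rw [abs_le] at hplus hminus
      linarith [hplus.2, hminus.1]
    have hs2 : s = ⟪e i, p i - p k⟫ := by
      rw [inner_sub_right, hper i k (Ne.symm hik), hsdef]
    calc ρ ≤ |s| := hsρ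
      _ = |⟪e i, p i - p k⟫| := by rw [hs2]
      _ ≤ ‖e i‖ * ‖p i - p k‖ := abs_real_inner_le_norm _ _
      _ = ‖p i - p k‖ := by rw [he i, one_mul]
  -- Step 2: the two corners on line j
  set i : Fin 3 := j + 1 with hi
  set k : Fin 3 := j + 2 with hk
  have hijk : i ≠ j ∧ k ≠ j ∧ i ≠ k := by
    revert hi hk; fin_cases j <;> decide
  obtain ⟨hij, hkj, hik⟩ := hijk
  have hpiQ : p i ∈ unitSq := hhigh (subset_convexHull ℝ _ ⟨i, rfl⟩)
  have hpkQ : p k ∈ unitSq := hhigh (subset_convexHull ℝ _ ⟨k, rfl⟩)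
  have hpil : ⟪e j, p i⟫ = r j := hper j i hij
  have hpkl : ⟪e j, p k⟫ = r j := hper j k hkj
  -- x lies on the line through p i and p k
  have hdne : p k - p i ≠ 0 := by
    intro h0
    have : ‖p k - p i‖ = 0 := by rw [h0, norm_zero]
    have := hsep k i (Ne.symm hik)
    linarith
  obtain ⟨t, ht⟩ := collin (e j) (x - p i) (p k - p i) (he j)
    (by rw [inner_sub_right, hxl, hpil, sub_self])
    (by rw [inner_sub_right, hpkl, hpil, sub_self]) hdne
  -- bound |t|
  have htb : |t| ≤ 4 / (5 * c) := by
    have h1 : ‖x - p i‖ = |t| * ‖p k - p i‖ := by rw [ht, norm_smul, Real.norm_eq_abs]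
    have h2 : ‖x - p i‖ ≤ 2 := diam_bound x (p i) hxQ hpiQ
    have h3 : ρ ≤ ‖p k - p i‖ := hsep k i (Ne.symm hik)
    have h4 : 0 ≤ |t| := abs_nonneg t
    have h5 : |t| * ρ ≤ 2 := by nlinarith
    rw [le_div_iff₀ (by positivity : (0:ℝ) < 5 * c)]
    have h6 : |t| * (5 * c) = 2 * (|t| * ρ) := by rw [hρdef]; ring
    linarith
  -- affine evaluation
  have heval : ∀ B : EuclideanSpace ℝ (Fin 2) →ᵃ[ℝ] ℝ,
      B x = B (p i) + t * (B (p k) - B (p i)) := by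
    intro B
    have hxe : x = AffineMap.lineMap (p i) (p k) t := by
      rw [AffineMap.lineMap_apply]
      have : x = t • (p k - p i) + p i := by
        rw [← ht]; abel
      rw [this]
      rfl
    rw [hxe, AffineMap.apply_lineMap, AffineMap.lineMap_apply]
    simp [vsub_eq_sub, vadd_eq_add]
    ring
  have hβ0 : 0 ≤ β := le_trans (abs_nonneg _) (hβ j (p i) ⟨hpil, hpiQ⟩)
  have hdi : |f (p i) - Aj j (p i)| ≤ β := hβ j (p i) ⟨hpil, hpiQ⟩
  have hdk : |f (p k) - Aj j (p k)| ≤ β := hβ j (p k) ⟨hpkl, hpkQ⟩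
  have hcomb : A x - Aj j x
      = (1 - t) * (f (p i) - Aj j (p i)) + t * (f (p k) - Aj j (p k)) := by
    rw [heval A, heval (Aj j), hA i, hA k]; ring
  rw [hcomb]
  calc |(1 - t) * (f (p i) - Aj j (p i)) + t * (f (p k) - Aj j (p k))|
      ≤ |1 - t| * |f (p i) - Aj j (p i)| + |t| * |f (p k) - Aj j (p k)| := by
        refine le_trans (abs_add_le _ _) ?_
        rw [abs_mul, abs_mul]
    _ ≤ |1 - t| * β + |t| * β := by
        exact add_le_add (mul_le_mul_of_nonneg_left hdi (abs_nonneg _))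
          (mul_le_mul_of_nonneg_left hdk (abs_nonneg _))
    _ ≤ (1 + 2 * |t|) * β := by
        have : |1 - t| ≤ 1 + |t| := by
          calc |1 - t| ≤ |1| + |t| := abs_sub _ _
            _ = 1 + |t| := by rw [abs_one]
        nlinarith [abs_nonneg t]
    _ ≤ (1 + 8 / (5 * c)) * β := by
        have heq : 8 / (5 * c) = 2 * (4 / (5 * c)) := by ring
        nlinarith [htb, abs_nonneg t]
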